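/- For every a ∈ ℝ and c ∈ ℂ, the fiber of F⁺ satisfies (F⁺)⁻¹({(a, c)}) = N⁺_{a,c}; that is, Joyce's piecewise smooth map F⁺ is a fibration of ℂ³ whose fibers are exactly the sets N⁺_{a,c}. -/

import Mathlib

open Complex

/-- Joyce's set `N⁺_{a,c}`. -/
noncomputable def NplusC (a : ℝ) (c : ℂ) : Set (Fin 3 → ℂ) :=
  {z : Fin 3 → ℂ |
    ‖z 0‖ ^ 2 - a = ‖z 1‖ ^ 2 + a ∧
    ‖z 1‖ ^ 2 + a = ‖z 2 - c‖ ^ 2 + |a| ∧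
    (z 0 * z 1 * (z 2 - c)).im = 0 ∧ 0 ≤ (z 0 * z 1 * (z 2 - c)).re}

/-- Joyce's piecewise smooth map `F⁺ : ℂ³ → ℝ × ℂ`. -/
noncomputable def Fplus (z : Fin 3 → ℂ) : ℝ × ℂ :=
  (1 / 2 * (‖z 0‖ ^ 2 - ‖z 1‖ ^ 2),
    if z 0 = 0 ∧ z 1 = 0 then z 2
    else if ‖z 1‖ ≤ ‖z 0‖ then
      z 2 - (starRingEnd ℂ) (z 0) * (starRingEnd ℂ) (z 1) / (‖z 0‖ : ℂ)
    else
      z 2 - (starRingEnd ℂ) (z 0) * (starRingEnd ℂ) (z 1) / (‖z 1‖ : ℂ))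

private lemma key_aux (u v : ℂ) (hu : u ≠ 0) (him : (u*v).im = 0) (hre : 0 ≤ (u*v).re) :
    v = (‖v‖ : ℂ) * (starRingEnd ℂ) u / (‖u‖ : ℂ) := by
  have h2 : u * v = ((u*v).re : ℂ) := by
    apply Complex.ext <;> simp [him]
  have h3 : (u*v).re = ‖u‖ * ‖v‖ := by
    rw [← norm_mul, Complex.norm_def, Complex.normSq_apply, him]
    rw [show (u*v).re * (u*v).re + 0 * 0 = (u*v).re ^2 by ring, Real.sqrt_sq hre]
  have h1 : u * v = ((‖u‖ * ‖v‖ : ℝ) : ℂ) := by rw [h2, h3]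
  have hu' : (‖u‖ : ℂ) ≠ 0 := by
    simpa using (norm_ne_zero_iff.mpr hu)
  have hc : (starRingEnd ℂ) u * u = ((‖u‖ : ℂ))^2 := by
    rw [mul_comm, Complex.mul_conj, Complex.normSq_eq_norm_sq]
    push_cast; ring
  field_simp
  apply mul_left_cancel₀ hu
  push_cast at h1 ⊢
  linear_combination (‖u‖ : ℂ) * h1 - (‖v‖ : ℂ) * hc

/-- The fibers of Joyce's map `F⁺` are exactly the sets `N⁺_{a,c}`. -/
theorem Fplus_fiber (a : ℝ) (c : ℂ) :
    Fplus ⁻¹' {(a, c)} = NplusC a c := by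
  ext z
  simp only [Set.mem_preimage, Set.mem_singleton_iff, Prod.ext_iff, Fplus, NplusC,
    Set.mem_setOf_eq]
  set r0 := ‖z 0‖ with hr0def
  set r1 := ‖z 1‖ with hr1def
  have hr0n : 0 ≤ r0 := norm_nonneg _
  have hr1n : 0 ≤ r1 := norm_nonneg _
  constructor
  · rintro ⟨ha, hw⟩
    by_cases h00 : z 0 = 0 ∧ z 1 = 0
    · obtain ⟨h0, h1⟩ := h00
      rw [if_pos ⟨h0, h1⟩] at hw
      have ha0 : a = 0 := by
        rw [← ha, hr0def, hr1def, h0, h1]; simp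
      refine ⟨?_, ?_, ?_, ?_⟩ <;>
        simp [h0, h1, hw, ha0, hr0def, hr1def]
    · rw [if_neg h00] at hw
      by_cases hle : r1 ≤ r0
      · rw [if_pos hle] at hw
        have h0 : z 0 ≠ 0 := by
          intro h0
          apply h00
          refine ⟨h0, ?_⟩
          have : r0 = 0 := by rw [hr0def, h0]; simp
          have : r1 = 0 := le_antisymm (this ▸ hle) hr1n
          exact norm_eq_zero.mp this
        have hr0' : (r0 : ℂ) ≠ 0 := by
          simp only [ne_eq, Complex.ofReal_eq_zero, hr0def]
          exact norm_ne_zero_iff.mpr h0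
        have hz2 : z 2 - c = (starRingEnd ℂ) (z 0) * (starRingEnd ℂ) (z 1) / (r0 : ℂ) := by
          rw [sub_eq_iff_eq_add] at hw ⊢
          rw [hw]; ring
        have hanneg : 0 ≤ a := by nlinarith
        have e0 : z 0 * (starRingEnd ℂ) (z 0) = ((r0 : ℂ))^2 := by
          rw [Complex.mul_conj, Complex.normSq_eq_norm_sq]; push_cast; rfl
        have e1 : z 1 * (starRingEnd ℂ) (z 1) = ((r1 : ℂ))^2 := by
          rw [Complex.mul_conj, Complex.normSq_eq_norm_sq]; push_cast; rfl
        have hr0r : r0 ≠ 0 := norm_ne_zero_iff.mpr h0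
        have habs : ‖z 2 - c‖ = r1 := by
          rw [hz2, norm_div, norm_mul, Complex.norm_conj, Complex.norm_conj,
            Complex.norm_real, Real.norm_of_nonneg hr0n, ← hr0def, ← hr1def]
          field_simp
        have hprod : z 0 * z 1 * (z 2 - c) = ((r0 * r1 ^ 2 : ℝ) : ℂ) := by
          rw [hz2]
          push_cast
          field_simp
          linear_combination (z 1 * (starRingEnd ℂ) (z 1)) * e0 + ((r0:ℂ)^2) * e1
        refine ⟨by linarith, ?_, ?_, ?_⟩
        · rw [habs, _root_.abs_of_nonneg hanneg]
        · rw [hprod, Complex.ofReal_im]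
        · rw [hprod, Complex.ofReal_re]; positivity
      · rw [if_neg hle] at hw
        push_neg at hle
        have h1 : z 1 ≠ 0 := by
          intro h1
          have : r1 = 0 := by rw [hr1def, h1]; simp
          rw [this] at hle; exact absurd hle (not_lt.mpr hr0n)
        have hr1' : (r1 : ℂ) ≠ 0 := by
          simp only [ne_eq, Complex.ofReal_eq_zero, hr1def]
          exact norm_ne_zero_iff.mpr h1
        have hz2 : z 2 - c = (starRingEnd ℂ) (z 0) * (starRingEnd ℂ) (z 1) / (r1 : ℂ) := by
          rw [sub_eq_iff_eq_add] at hw ⊢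
          rw [hw]; ring
        have hanpos : a ≤ 0 := by nlinarith
        have e0 : z 0 * (starRingEnd ℂ) (z 0) = ((r0 : ℂ))^2 := by
          rw [Complex.mul_conj, Complex.normSq_eq_norm_sq]; push_cast; rfl
        have e1 : z 1 * (starRingEnd ℂ) (z 1) = ((r1 : ℂ))^2 := by
          rw [Complex.mul_conj, Complex.normSq_eq_norm_sq]; push_cast; rfl
        have hr1r : r1 ≠ 0 := norm_ne_zero_iff.mpr h1
        have habs : ‖z 2 - c‖ = r0 := by
          rw [hz2, norm_div, norm_mul, Complex.norm_conj, Complex.norm_conj,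
            Complex.norm_real, Real.norm_of_nonneg hr1n, ← hr0def, ← hr1def]
          field_simp
        have hprod : z 0 * z 1 * (z 2 - c) = ((r1 * r0 ^ 2 : ℝ) : ℂ) := by
          rw [hz2]
          push_cast
          field_simp
          linear_combination (z 1 * (starRingEnd ℂ) (z 1)) * e0 + ((r0:ℂ)^2) * e1
        refine ⟨by linarith, ?_, ?_, ?_⟩
        · rw [habs, _root_.abs_of_nonpos hanpos]; linarith
        · rw [hprod, Complex.ofReal_im]
        · rw [hprod, Complex.ofReal_re]; positivity
  · rintro ⟨h1, h2, him, hre⟩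
    have ha : 1 / 2 * (r0 ^ 2 - r1 ^ 2) = a := by linarith
    refine ⟨ha, ?_⟩
    by_cases h00 : z 0 = 0 ∧ z 1 = 0
    · rw [if_pos h00]
      obtain ⟨hz0, hz1⟩ := h00
      have hr0z : r0 = 0 := by rw [hr0def, hz0]; simp
      have hr1z : r1 = 0 := by rw [hr1def, hz1]; simp
      have ha0 : a = 0 := by rw [hr0z, hr1z] at h1; linarith
      have : ‖z 2 - c‖ ^ 2 = 0 := by
        rw [hr1z, ha0] at h2; simp at h2; linarith
      have : z 2 - c = 0 := by
        have := pow_eq_zero_iff (n := 2) (by norm_num) |>.mp this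
        exact norm_eq_zero.mp this
      exact sub_eq_zero.mp this
    · rw [if_neg h00]
      by_cases hle : r1 ≤ r0
      · rw [if_pos hle]
        have h0 : z 0 ≠ 0 := by
          intro h0
          apply h00
          refine ⟨h0, ?_⟩
          have : r0 = 0 := by rw [hr0def, h0]; simp
          have : r1 = 0 := le_antisymm (this ▸ hle) hr1n
          exact norm_eq_zero.mp this
        have hr0' : (r0 : ℂ) ≠ 0 := by
          simp only [ne_eq, Complex.ofReal_eq_zero, hr0def]
          exact norm_ne_zero_iff.mpr h0
        have hanneg : 0 ≤ a := by nlinarith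
        have habs2 : ‖z 2 - c‖ ^ 2 = r1 ^ 2 := by
          rw [_root_.abs_of_nonneg hanneg] at h2; linarith
        have habs : ‖z 2 - c‖ = r1 := by
          nlinarith [norm_nonneg (z 2 - c)]
        by_cases hz1 : z 1 = 0
        · have hz2 : z 2 - c = 0 := by
            have : r1 = 0 := by rw [hr1def, hz1]; simp
            rw [this] at habs
            exact norm_eq_zero.mp habs
          rw [hz1]
          rw [sub_eq_iff_eq_add]
          rw [sub_eq_zero] at hz2
          rw [hz2]; simp
        · have hu : z 0 * z 1 ≠ 0 := mul_ne_zero h0 hz1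
          have hk := key_aux (z 0 * z 1) (z 2 - c) hu (by rw [mul_assoc] at him ⊢; exact him)
            (by rw [mul_assoc] at hre ⊢; exact hre)
          rw [habs, norm_mul, map_mul, ← hr0def, ← hr1def] at hk
          have hr1' : (r1 : ℂ) ≠ 0 := by
            simp only [ne_eq, Complex.ofReal_eq_zero, hr1def]
            exact norm_ne_zero_iff.mpr hz1
          rw [sub_eq_iff_eq_add] at hk
          rw [sub_eq_iff_eq_add, hk]
          push_cast
          field_simp
          ring
      · rw [if_neg hle]
        push_neg at hle
        have hz1 : z 1 ≠ 0 := by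
          intro hz1
          have : r1 = 0 := by rw [hr1def, hz1]; simp
          rw [this] at hle
          exact absurd hle (not_lt.mpr hr0n)
        have hr1' : (r1 : ℂ) ≠ 0 := by
          simp only [ne_eq, Complex.ofReal_eq_zero, hr1def]
          exact norm_ne_zero_iff.mpr hz1
        have hanpos : a ≤ 0 := by nlinarith
        have habs2 : ‖z 2 - c‖ ^ 2 = r0 ^ 2 := by
          rw [_root_.abs_of_nonpos hanpos] at h2; linarith
        have habs : ‖z 2 - c‖ = r0 := by
          nlinarith [norm_nonneg (z 2 - c)]
        by_cases hz0 : z 0 = 0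
        · have hz2 : z 2 - c = 0 := by
            have : r0 = 0 := by rw [hr0def, hz0]; simp
            rw [this] at habs
            exact norm_eq_zero.mp habs
          rw [hz0]
          rw [sub_eq_iff_eq_add]
          rw [sub_eq_zero] at hz2
          rw [hz2]; simp
        · have hu : z 0 * z 1 ≠ 0 := mul_ne_zero hz0 hz1
          have hk := key_aux (z 0 * z 1) (z 2 - c) hu (by rw [mul_assoc] at him ⊢; exact him)
            (by rw [mul_assoc] at hre ⊢; exact hre)
          rw [habs, norm_mul, map_mul, ← hr0def, ← hr1def] at hk
          have hr0' : (r0 : ℂ) ≠ 0 := by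
            simp only [ne_eq, Complex.ofReal_eq_zero, hr0def]
            exact norm_ne_zero_iff.mpr hz0
          rw [sub_eq_iff_eq_add] at hk
          rw [sub_eq_iff_eq_add, hk]
          push_cast
          field_simp
          ring
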